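/- For every integer w with 0 ≤ w ≤ D, the function C(·,·,w) satisfies the Quadrangle Inequality: for all indices 1 ≤ i ≤ i′ ≤ j ≤ j′ ≤ n, C(i,j,w) + C(i′,j′,w) ≤ C(i,j′,w) + C(i′,j,w). -/

import Mathlib

open scoped ENNReal NNReal BigOperators

/-- **Corollary 1.** For every `0 ≤ w ≤ D`, the cost function `C(·,·,w)` of optimal
alphabetic codes with at most `w` ones per codeword satisfies the Quadrangle Inequality:
for all `1 ≤ i ≤ i' ≤ j ≤ j' ≤ n`,
`C(i,j,w) + C(i',j',w) ≤ C(i,j',w) + C(i',j,w)`.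
Here `C(i,i,w) = 0`, `C(i,j,0) = ∞` for `i < j`, and for `i < j`, `w ≥ 1`,
`C(i,j,w) = (p_i + ⋯ + p_j) + min_{i < k ≤ j} (C(i,k-1,w) + C(k,j,w-1))`. -/
theorem quadrangle_inequality_for_C
    (n D : ℕ) (p : ℕ → ℝ≥0)
    (C : ℕ → ℕ → ℕ → ℝ≥0∞)
    (hdiag : ∀ i w : ℕ, 1 ≤ i → i ≤ n → C i i w = 0)
    (hzero : ∀ i j : ℕ, 1 ≤ i → i < j → j ≤ n → C i j 0 = ⊤)
    (hrec : ∀ i j w : ℕ, 1 ≤ i → i < j → j ≤ n → 1 ≤ w →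
      C i j w = (∑ k ∈ Finset.Icc i j, (p k : ℝ≥0∞)) +
        ⨅ k ∈ Finset.Ioc i j, (C i (k - 1) w + C k j (w - 1))) :
    ∀ w : ℕ, w ≤ D → ∀ i i' j j' : ℕ, 1 ≤ i → i ≤ i' → i' ≤ j → j ≤ j' → j' ≤ n →
      C i j w + C i' j' w ≤ C i j' w + C i' j w := by
  -- abbreviation for the weight sums
  set S : ℕ → ℕ → ℝ≥0∞ := fun a b => ∑ m ∈ Finset.Icc a b, (p m : ℝ≥0∞) with hS
  -- upper bound by any split point
  have hle : ∀ i j w k : ℕ, 1 ≤ i → i < j → j ≤ n → 1 ≤ w → i < k → k ≤ j →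
      C i j w ≤ S i j + (C i (k - 1) w + C k j (w - 1)) := by
    intro i j w k h1 h2 h3 h4 hk1 hk2
    rw [hrec i j w h1 h2 h3 h4]
    exact add_le_add_right (iInf₂_le k (Finset.mem_Ioc.2 ⟨hk1, hk2⟩)) _
  -- the infimum is attained at some split point
  have hopt : ∀ i j w : ℕ, 1 ≤ i → i < j → j ≤ n → 1 ≤ w →
      ∃ k, i < k ∧ k ≤ j ∧ C i j w = S i j + (C i (k - 1) w + C k j (w - 1)) := by
    intro i j w h1 h2 h3 h4
    obtain ⟨k, hk, hke⟩ := Finset.exists_mem_eq_inf (Finset.Ioc i j)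
      ⟨j, Finset.mem_Ioc.2 ⟨h2, le_rfl⟩⟩ (fun k => C i (k - 1) w + C k j (w - 1))
    rw [Finset.mem_Ioc] at hk
    refine ⟨k, hk.1, hk.2, ?_⟩
    rw [hrec i j w h1 h2 h3 h4, ← Finset.inf_eq_iInf, ← hke]
  -- splitting of the weight sums
  have hsplit : ∀ a b c : ℕ, 1 ≤ a → a < b → b ≤ c →
      S a c = S a (b - 1) + S b c := by
    intro a b c h1 h2 h3
    have e1 : Finset.Icc a c = Finset.Ioc (a - 1) c := by
      rw [← Finset.Icc_add_one_left_eq_Ioc]; congr 1; omega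
    have e2 : Finset.Icc a (b - 1) = Finset.Ioc (a - 1) (b - 1) := by
      rw [← Finset.Icc_add_one_left_eq_Ioc]; congr 1; omega
    have e3 : Finset.Icc b c = Finset.Ioc (b - 1) c := by
      rw [← Finset.Icc_add_one_left_eq_Ioc]; congr 1; omega
    simp only [hS, e1, e2, e3]
    rw [Finset.sum_Ioc_consecutive _ (by omega : a - 1 ≤ b - 1) (by omega : b - 1 ≤ c)]
  -- monotonicity of the weight sums
  have hSmono : ∀ a a' b b' : ℕ, a' ≤ a → b ≤ b' → S a b ≤ S a' b' := by
    intro a a' b b' h1 h2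
    exact Finset.sum_le_sum_of_subset (Finset.Icc_subset_Icc h1 h2)
  -- the weight-sum exchange identity
  have hxchg : ∀ i i' j j' : ℕ, 1 ≤ i → i < i' → i' ≤ j → j ≤ j' →
      S i j + S i' j' = S i j' + S i' j := by
    intro i i' j j' h1 h2 h3 h4
    rw [hsplit i i' j h1 h2 h3, hsplit i i' j' h1 h2 (h3.trans h4)]
    ring
  -- monotonicity of C in w
  have hmono : ∀ w : ℕ, ∀ d i j : ℕ, 1 ≤ i → i ≤ j → j ≤ n → j - i ≤ d →
      C i j (w + 1) ≤ C i j w := by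
    intro w
    induction w with
    | zero =>
      intro d i j h1 h2 h3 _
      rcases eq_or_lt_of_le h2 with rfl | h
      · rw [hdiag i 1 h1 h3, hdiag i 0 h1 h3]
      · rw [hzero i j h1 h h3]; exact le_top
    | succ w ih =>
      intro d
      induction d with
      | zero =>
        intro i j h1 h2 h3 hd
        have : i = j := by omega
        subst this
        rw [hdiag i (w + 2) h1 h3, hdiag i (w + 1) h1 h3]
      | succ d ihd =>
        intro i j h1 h2 h3 hd
        rcases eq_or_lt_of_le h2 with rfl | h
        · rw [hdiag i (w + 2) h1 h3, hdiag i (w + 1) h1 h3]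
        · rw [hrec i j (w + 2) h1 h h3 (by omega), hrec i j (w + 1) h1 h h3 (by omega)]
          refine add_le_add_right (iInf₂_mono ?_) _
          intro k hk
          rw [Finset.mem_Ioc] at hk
          have t1 : C i (k - 1) (w + 2) ≤ C i (k - 1) (w + 1) :=
            ihd i (k - 1) h1 (by omega) (by omega) (by omega)
          have t2 : C k j (w + 1) ≤ C k j w :=
            ih (j - k) k j (by omega) hk.2 h3 le_rfl
          exact add_le_add t1 t2
  -- the main quadrangle inequality, by induction on w
  suffices h : ∀ w : ℕ, ∀ i i' j j' : ℕ, 1 ≤ i → i ≤ i' → i' ≤ j → j ≤ j' → j' ≤ n →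
      C i j w + C i' j' w ≤ C i j' w + C i' j w by
    intro w _ ; exact h w
  intro w
  induction w with
  | zero =>
    intro i i' j j' h1 h2 h3 h4 h5
    rcases eq_or_lt_of_le (h2.trans (h3.trans h4)) with heq | hij'
    · have e1 : i = i' := by omega
      have e2 : i = j := by omega
      have e3 : i = j' := by omega
      subst e1; rw [← e2, ← e3]
    · rw [hzero i j' h1 hij' h5]
      simp
  | succ w ih =>
    -- inner strong induction on the outer span
    have main : ∀ s : ℕ, ∀ i i' j j' : ℕ, j' - i ≤ s → 1 ≤ i → i ≤ i' → i' ≤ j → j ≤ j' →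
        j' ≤ n → C i j (w + 1) + C i' j' (w + 1) ≤ C i j' (w + 1) + C i' j (w + 1) := by
      intro s
      induction s with
      | zero =>
        intro i i' j j' hs h1 h2 h3 h4 h5
        have e1 : i' = i := by omega
        have e2 : j = i := by omega
        have e3 : j' = i := by omega
        subst e1; subst e2; subst e3
        exact le_rfl
      | succ s ihs =>
        intro i i' j j' hs h1 h2 h3 h4 h5
        rcases eq_or_lt_of_le h2 with rfl | hii'
        · exact (add_comm _ _).le
        rcases eq_or_lt_of_le h4 with rfl | hjj'
        · exact le_rfl
        have hij' : i < j' := by omega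
        obtain ⟨y, hy1, hy2, hyE⟩ := hopt i j' (w + 1) h1 hij' h5 (by omega)
        simp only [Nat.add_sub_cancel] at hyE
        rcases eq_or_lt_of_le h3 with rfl | hi'j
        · -- triangle case : i < i' = j < j'
          rw [hdiag i' (w + 1) (by omega) (by omega)]
          rcases le_or_gt y i' with hyj | hjy
          · -- split point y inside [i, i']
            have b1 : C i i' (w + 1) ≤ S i i' + (C i (y - 1) (w + 1) + C y i' w) :=
              hle i i' (w + 1) y h1 hii' (by omega) (by omega) hy1 hyj
            have b2 : C i' j' (w + 1) ≤ C i' j' w :=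
              hmono w (j' - i') i' j' (by omega) (by omega) h5 le_rfl
            have b3 : C y i' w + C i' j' w ≤ C y j' w + C i' i' w :=
              ih y i' i' j' (by omega) hyj le_rfl hjj'.le h5
            rw [hdiag i' w (by omega) (by omega)] at b3
            calc C i i' (w + 1) + C i' j' (w + 1)
                ≤ (S i i' + (C i (y - 1) (w + 1) + C y i' w)) + C i' j' w :=
                  add_le_add b1 b2
              _ = S i i' + C i (y - 1) (w + 1) + (C y i' w + C i' j' w) := by ring
              _ ≤ S i j' + C i (y - 1) (w + 1) + (C y j' w + 0) := by
                  exact add_le_add (add_le_add (hSmono i i i' j' le_rfl hjj'.le) le_rfl) b3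
              _ = S i j' + (C i (y - 1) (w + 1) + C y j' w) := by ring
              _ = C i j' (w + 1) := hyE.symm
              _ ≤ C i j' (w + 1) + 0 := by simp
          · -- split point y inside (i', j']
            have b1 : C i' j' (w + 1) ≤ S i' j' + (C i' (y - 1) (w + 1) + C y j' w) :=
              hle i' j' (w + 1) y (by omega) hjj' h5 (by omega) hjy hy2
            have b2 : C i i' (w + 1) + C i' (y - 1) (w + 1) ≤
                C i (y - 1) (w + 1) + C i' i' (w + 1) :=
              ihs i i' i' (y - 1) (by omega) h1 hii'.le le_rfl (by omega) (by omega)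
            rw [hdiag i' (w + 1) (by omega) (by omega)] at b2
            calc C i i' (w + 1) + C i' j' (w + 1)
                ≤ C i i' (w + 1) + (S i' j' + (C i' (y - 1) (w + 1) + C y j' w)) :=
                  add_le_add_right b1 _
              _ = S i' j' + (C i i' (w + 1) + C i' (y - 1) (w + 1)) + C y j' w := by ring
              _ ≤ S i j' + (C i (y - 1) (w + 1) + 0) + C y j' w := by
                  exact add_le_add (add_le_add (hSmono i' i j' j' hii'.le le_rfl) b2) le_rfl
              _ = S i j' + (C i (y - 1) (w + 1) + C y j' w) := by ring
              _ = C i j' (w + 1) := hyE.symm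
              _ ≤ C i j' (w + 1) + 0 := by simp
        · -- proper case : i < i' < j < j'
          obtain ⟨z, hz1, hz2, hzE⟩ := hopt i' j (w + 1) (by omega) hi'j (by omega) (by omega)
          simp only [Nat.add_sub_cancel] at hzE
          have hxc : S i j + S i' j' = S i j' + S i' j :=
            hxchg i i' j j' h1 hii' h3 h4
          rcases le_or_gt z y with hzy | hyz
          · -- z ≤ y : exchange the left parts
            have b1 : C i j (w + 1) ≤ S i j + (C i (z - 1) (w + 1) + C z j w) :=
              hle i j (w + 1) z h1 (by omega) (by omega) (by omega) (by omega) hz2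
            have b2 : C i' j' (w + 1) ≤ S i' j' + (C i' (y - 1) (w + 1) + C y j' w) :=
              hle i' j' (w + 1) y (by omega) (by omega) h5 (by omega) (by omega) hy2
            have b3 : C i (z - 1) (w + 1) + C i' (y - 1) (w + 1) ≤
                C i (y - 1) (w + 1) + C i' (z - 1) (w + 1) :=
              ihs i i' (z - 1) (y - 1) (by omega) h1 hii'.le (by omega) (by omega) (by omega)
            calc C i j (w + 1) + C i' j' (w + 1)
                ≤ (S i j + (C i (z - 1) (w + 1) + C z j w)) +
                  (S i' j' + (C i' (y - 1) (w + 1) + C y j' w)) := add_le_add b1 b2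
              _ = (S i j + S i' j') + ((C i (z - 1) (w + 1) + C i' (y - 1) (w + 1)) +
                  (C z j w + C y j' w)) := by ring
              _ ≤ (S i j' + S i' j) + ((C i (y - 1) (w + 1) + C i' (z - 1) (w + 1)) +
                  (C z j w + C y j' w)) := by
                  exact add_le_add (le_of_eq hxc) (add_le_add b3 le_rfl)
              _ = (S i j' + (C i (y - 1) (w + 1) + C y j' w)) +
                  (S i' j + (C i' (z - 1) (w + 1) + C z j w)) := by ring
              _ = C i j' (w + 1) + C i' j (w + 1) := by rw [← hyE, ← hzE]
          · -- y < z : exchange the right parts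
            have b1 : C i j (w + 1) ≤ S i j + (C i (y - 1) (w + 1) + C y j w) :=
              hle i j (w + 1) y h1 (by omega) (by omega) (by omega) hy1 (by omega)
            have b2 : C i' j' (w + 1) ≤ S i' j' + (C i' (z - 1) (w + 1) + C z j' w) :=
              hle i' j' (w + 1) z (by omega) (by omega) h5 (by omega) hz1 (by omega)
            have b3 : C y j w + C z j' w ≤ C y j' w + C z j w :=
              ih y z j j' (by omega) hyz.le hz2 hjj'.le h5
            calc C i j (w + 1) + C i' j' (w + 1)
                ≤ (S i j + (C i (y - 1) (w + 1) + C y j w)) +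
                  (S i' j' + (C i' (z - 1) (w + 1) + C z j' w)) := add_le_add b1 b2
              _ = (S i j + S i' j') + ((C y j w + C z j' w) +
                  (C i (y - 1) (w + 1) + C i' (z - 1) (w + 1))) := by ring
              _ ≤ (S i j' + S i' j) + ((C y j' w + C z j w) +
                  (C i (y - 1) (w + 1) + C i' (z - 1) (w + 1))) := by
                  exact add_le_add (le_of_eq hxc) (add_le_add b3 le_rfl)
              _ = (S i j' + (C i (y - 1) (w + 1) + C y j' w)) +
                  (S i' j + (C i' (z - 1) (w + 1) + C z j w)) := by ring
              _ = C i j' (w + 1) + C i' j (w + 1) := by rw [← hyE, ← hzE]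
    intro i i' j j' h1 h2 h3 h4 h5
    exact main (j' - i) i i' j j' le_rfl h1 h2 h3 h4 h5
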